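/- Let β > 0, k > 0, ε > 0 and C > 0. For every α > 0 there exists R* > 0 such that for every r_0 ≥ R*, the sequence defined by r_{n+1} = r_n + β·r_n^{1+ε}·e^{−k·r_n} satisfies Σ_{n=0}^∞ C·e^{−k·r_n} < α; in particular the series Σ_{n=0}^∞ e^{−k·r_n} converges. -/

import Mathlib

open Real Filter

/-- Key convexity estimate: for `0 < ε' ≤ 1` and `0 < x ≤ y`,
`ε' (y - x) y^{-(1+ε')} ≤ x^{-ε'} - y^{-ε'}`. -/
lemma aux_rpow_diff {ε' x y : ℝ} (hε0 : 0 < ε') (hε1 : ε' ≤ 1)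
    (hx : 0 < x) (hxy : x ≤ y) :
    ε' * (y - x) * y ^ (-(1 + ε')) ≤ x ^ (-ε') - y ^ (-ε') := by
  have hy : 0 < y := hx.trans_le hxy
  set u : ℝ := (y - x) / y with hu_def
  have hu0 : 0 ≤ u := div_nonneg (by linarith) hy.le
  have hu1 : u < 1 := by
    rw [hu_def, div_lt_one hy]; linarith
  -- Bernoulli: (1 - u)^ε' ≤ 1 - ε' * u
  have hb : (1 - u) ^ ε' ≤ 1 - ε' * u := by
    have := rpow_one_add_le_one_add_mul_self (s := -u) (by linarith) hε0.le hε1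
    simpa [sub_eq_add_neg, mul_neg] using this
  have h1u : (0:ℝ) < 1 - u := by linarith
  have h1eu : (0:ℝ) < 1 - ε' * u := by nlinarith
  have hpos : (0:ℝ) < (1 - u) ^ ε' := Real.rpow_pos_of_pos h1u _
  -- (1 + ε' u) ≤ (1 - u)^(-ε')
  have hmul1 : (1 + ε' * u) * (1 - u) ^ ε' ≤ 1 := by
    nlinarith [mul_le_mul_of_nonneg_left hb (show (0:ℝ) ≤ 1 + ε' * u by positivity),
      sq_nonneg (ε' * u)]
  have hmain : 1 + ε' * u ≤ (1 - u) ^ (-ε') := by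
    rw [Real.rpow_neg h1u.le, ← one_div, le_div_iff₀ hpos]
    exact hmul1
  -- rewrite x = (1-u) * y
  have hxuy : x = (1 - u) * y := by
    rw [hu_def, sub_mul, div_mul_cancel₀ _ hy.ne']; ring
  have hxrw : x ^ (-ε') = (1 - u) ^ (-ε') * y ^ (-ε') := by
    rw [hxuy, Real.mul_rpow h1u.le hy.le]
  have hyε : (0:ℝ) < y ^ (-ε') := Real.rpow_pos_of_pos hy _
  have hmul : (1 + ε' * u) * y ^ (-ε') ≤ x ^ (-ε') := by
    rw [hxrw]
    exact mul_le_mul_of_nonneg_right hmain hyε.le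
  have hid : u * y ^ (-ε') = (y - x) * y ^ (-(1 + ε')) := by
    rw [hu_def, neg_add, Real.rpow_add hy, Real.rpow_neg_one]
    field_simp
  nlinarith [hmul, hid]

/-- Summability estimate: for every `α > 0` one can choose the initial radius `r 0`
so large that `Σ C e^{−k r_n} < α` along the sequence
`r_{n+1} = r_n + β r_n^{1+ε} e^{−k r_n}`. -/
theorem stmt_14 (β k ε C : ℝ) (hβ : 0 < β) (hk : 0 < k) (hε : 0 < ε) (hC : 0 < C) :
    ∀ α : ℝ, 0 < α → ∃ Rstar : ℝ, 0 < Rstar ∧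
      ∀ r : ℕ → ℝ, Rstar ≤ r 0 →
        (∀ n : ℕ, r (n + 1) = r n + β * r n ^ (1 + ε) * Real.exp (-(k * r n))) →
        Summable (fun n : ℕ => Real.exp (-(k * r n))) ∧
          ∑' n : ℕ, C * Real.exp (-(k * r n)) < α := by
  intro α hα
  set ε' : ℝ := min ε 1 with hε'def
  have hε'0 : 0 < ε' := lt_min hε one_pos
  have hε'1 : ε' ≤ 1 := min_le_right _ _
  have hε'ε : ε' ≤ ε := min_le_left _ _
  set K : ℝ := (2:ℝ) ^ (1 + ε') / (β * ε') with hKdef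
  have hK : 0 < K := by
    apply div_pos (Real.rpow_pos_of_pos two_pos _) (by positivity)
  -- R₀ : increments are ≤ 1 from R₀ on
  obtain ⟨R₀, hR₀⟩ : ∃ R₀, ∀ x ≥ R₀, β * x ^ (1 + ε) * Real.exp (-(k * x)) ≤ 1 := by
    have h := tendsto_rpow_mul_exp_neg_mul_atTop_nhds_zero (1 + ε) k hk
    have h2 : ∀ᶠ x : ℝ in atTop, x ^ (1 + ε) * Real.exp (-k * x) ≤ 1 / β := by
      exact h.eventually_le_const (show (0:ℝ) < 1 / β by positivity)
    obtain ⟨R₀, hR⟩ := eventually_atTop.mp h2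
    refine ⟨R₀, fun x hx => ?_⟩
    have := hR x hx
    rw [neg_mul] at this
    calc β * x ^ (1 + ε) * Real.exp (-(k * x))
        = β * (x ^ (1 + ε) * Real.exp (-(k * x))) := by ring
      _ ≤ β * (1 / β) := mul_le_mul_of_nonneg_left this hβ.le
      _ = 1 := by field_simp
  -- R₁ : C * K * x^(-ε') < α from R₁ on
  obtain ⟨R₁, hR₁⟩ : ∃ R₁, ∀ x ≥ R₁, C * K * x ^ (-ε') < α := by
    have h := tendsto_rpow_neg_atTop hε'0
    have h2 : ∀ᶠ x : ℝ in atTop, C * K * x ^ (-ε') < α := by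
      have h3 : Filter.Tendsto (fun x : ℝ => C * K * x ^ (-ε')) atTop (nhds (C * K * 0)) :=
        h.const_mul (C * K)
      rw [mul_zero] at h3
      exact h3.eventually_lt_const hα
    exact eventually_atTop.mp h2
  refine ⟨max 1 (max R₀ R₁), lt_of_lt_of_le one_pos (le_max_left _ _), ?_⟩
  intro r hr0 hrec
  -- basic bounds on r
  have hge : ∀ n, max 1 (max R₀ R₁) ≤ r n := by
    intro n
    induction n with
    | zero => exact hr0
    | succ n ih =>
      have h1 : (1:ℝ) ≤ r n := le_trans (le_max_left _ _) ih
      have hnn : 0 ≤ β * r n ^ (1 + ε) * Real.exp (-(k * r n)) := by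
        have := Real.rpow_nonneg (by linarith : (0:ℝ) ≤ r n) (1 + ε)
        positivity
      rw [hrec n]; linarith
  have h1 : ∀ n, (1:ℝ) ≤ r n := fun n => le_trans (le_max_left _ _) (hge n)
  have hrpos : ∀ n, (0:ℝ) < r n := fun n => lt_of_lt_of_le one_pos (h1 n)
  have hmono : ∀ n, r n ≤ r (n + 1) := by
    intro n
    have hnn : 0 ≤ β * r n ^ (1 + ε) * Real.exp (-(k * r n)) := by
      have := Real.rpow_nonneg (hrpos n).le (1 + ε)
      positivity
    rw [hrec n]; linarith
  have hstep : ∀ n, r (n + 1) ≤ 2 * r n := by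
    intro n
    have hR0n : R₀ ≤ r n := le_trans (le_trans (le_max_left _ _) (le_max_right _ _)) (hge n)
    have := hR₀ (r n) hR0n
    rw [hrec n]; linarith [h1 n]
  -- key per-term bound
  set b : ℕ → ℝ := fun n => r n ^ (-ε') with hbdef
  have hbanti : ∀ n, b (n + 1) ≤ b n := fun n =>
    Real.rpow_le_rpow_of_nonpos (hrpos n) (hmono n) (by linarith)
  have hkey : ∀ n, Real.exp (-(k * r n)) ≤ K * (b n - b (n + 1)) := by
    intro n
    set x := r n
    set y := r (n + 1)
    set a := Real.exp (-(k * x)) with hadef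
    have ha : 0 < a := Real.exp_pos _
    have hdiff : y - x = β * x ^ (1 + ε) * a := by
      show r (n + 1) - r n = _
      rw [hrec n]; ring
    have hstep1 : ε' * (y - x) * y ^ (-(1 + ε')) ≤ b n - b (n + 1) :=
      aux_rpow_diff hε'0 hε'1 (hrpos n) (hmono n)
    -- y^(-(1+ε')) ≥ (2x)^(-(1+ε'))
    have hstep2 : (2 * x) ^ (-(1 + ε')) ≤ y ^ (-(1 + ε')) :=
      Real.rpow_le_rpow_of_nonpos (lt_of_lt_of_le (hrpos n) (hmono n)) (hstep n)
        (by linarith)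
    have h2x : (2 * x) ^ (-(1 + ε')) = ((2:ℝ) ^ (1 + ε'))⁻¹ * x ^ (-(1 + ε')) := by
      rw [Real.mul_rpow (by norm_num) (hrpos n).le, Real.rpow_neg (by norm_num),
        Real.rpow_neg (hrpos n).le]
    -- x^(1+ε) * x^(-(1+ε')) ≥ 1
    have hxε : 1 ≤ x ^ (1 + ε) * x ^ (-(1 + ε')) := by
      rw [← Real.rpow_add (hrpos n)]
      have : (0:ℝ) ≤ 1 + ε + -(1 + ε') := by linarith
      calc (1:ℝ) = x ^ (0:ℝ) := (Real.rpow_zero x).symm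
        _ ≤ x ^ (1 + ε + -(1 + ε')) :=
          Real.rpow_le_rpow_of_exponent_le (h1 n) (by linarith)
    have hxp : 0 < x ^ (-(1 + ε')) := Real.rpow_pos_of_pos (hrpos n) _
    have hxq : 0 < x ^ (1 + ε) := Real.rpow_pos_of_pos (hrpos n) _
    have h2p : (0:ℝ) < (2:ℝ) ^ (1 + ε') := Real.rpow_pos_of_pos two_pos _
    -- chain
    have hchain : ε' * (β * a) * ((2:ℝ) ^ (1 + ε'))⁻¹ ≤ b n - b (n + 1) := by
      calc ε' * (β * a) * ((2:ℝ) ^ (1 + ε'))⁻¹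
          ≤ ε' * (β * (x ^ (1 + ε) * x ^ (-(1 + ε')) * a)) * ((2:ℝ) ^ (1 + ε'))⁻¹ := by
            have hba : β * a ≤ β * (x ^ (1 + ε) * x ^ (-(1 + ε')) * a) := by
              nlinarith [mul_le_mul_of_nonneg_right hxε (mul_pos hβ ha).le]
            have h2i : (0:ℝ) < ((2:ℝ) ^ (1 + ε'))⁻¹ := by positivity
            exact mul_le_mul_of_nonneg_right
              (mul_le_mul_of_nonneg_left hba hε'0.le) h2i.le
        _ = ε' * (y - x) * (((2:ℝ) ^ (1 + ε'))⁻¹ * x ^ (-(1 + ε'))) := by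
            rw [hdiff]; ring
        _ = ε' * (y - x) * (2 * x) ^ (-(1 + ε')) := by rw [h2x]
        _ ≤ ε' * (y - x) * y ^ (-(1 + ε')) := by
            have hyx : 0 ≤ y - x := by linarith [hmono n]
            exact mul_le_mul_of_nonneg_left hstep2 (by positivity)
        _ ≤ b n - b (n + 1) := hstep1
    -- conclude a ≤ K * (b n - b (n+1))
    rw [hKdef]
    rw [div_mul_eq_mul_div, le_div_iff₀ (by positivity)]
    calc a * (β * ε') = ε' * (β * a) := by ring
      _ = ε' * (β * a) * ((2:ℝ) ^ (1 + ε'))⁻¹ * (2:ℝ) ^ (1 + ε') := by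
          field_simp
      _ ≤ (b n - b (n + 1)) * (2:ℝ) ^ (1 + ε') :=
          mul_le_mul_of_nonneg_right hchain h2p.le
      _ = (2:ℝ) ^ (1 + ε') * (b n - b (n + 1)) := by ring
  -- summability
  have hexpnn : ∀ n, (0:ℝ) ≤ Real.exp (-(k * r n)) := fun n => (Real.exp_pos _).le
  have hpartial : ∀ n, ∑ i ∈ Finset.range n, Real.exp (-(k * r i)) ≤ K * b 0 := by
    intro n
    calc ∑ i ∈ Finset.range n, Real.exp (-(k * r i))
        ≤ ∑ i ∈ Finset.range n, K * (b i - b (i + 1)) :=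
          Finset.sum_le_sum fun i _ => hkey i
      _ = K * ∑ i ∈ Finset.range n, (b i - b (i + 1)) := by
          rw [Finset.mul_sum]
      _ = K * (b 0 - b n) := by rw [Finset.sum_range_sub' b n]
      _ ≤ K * b 0 := by
          have hb0 : 0 ≤ b n := Real.rpow_nonneg (hrpos n).le _
          nlinarith
  have hsum : Summable (fun n : ℕ => Real.exp (-(k * r n))) :=
    summable_of_sum_range_le hexpnn hpartial
  refine ⟨hsum, ?_⟩
  have hR1 : R₁ ≤ r 0 := le_trans (le_trans (le_max_right _ _) (le_max_right _ _)) hr0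
  have hfinal : C * K * (r 0) ^ (-ε') < α := hR₁ (r 0) hR1
  have htsum : ∑' n : ℕ, C * Real.exp (-(k * r n)) ≤ C * (K * b 0) := by
    apply Real.tsum_le_of_sum_range_le (fun n => by positivity)
    intro n
    rw [← Finset.mul_sum]
    exact mul_le_mul_of_nonneg_left (hpartial n) hC.le
  calc ∑' n : ℕ, C * Real.exp (-(k * r n)) ≤ C * (K * b 0) := htsum
    _ = C * K * (r 0) ^ (-ε') := by rw [hbdef]; ring
    _ < α := hfinal
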